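/- Let r₁ ≤ r₂ and let A ∈ B^{r₁,s₁} satisfy ε_j(A) = 0 for all j ≠ r₂. Then a_{p,q} = 0 for all (p,q) outside the antidiagonal set {(r₁, r₂), (r₁-1, r₂+1), …, (r₁-k, r₂+k)} where k = min(r₁-1, n-r₂), and a_{r₁-k, r₂+k} ≤ a_{r₁-k+1, r₂+k-1} ≤ ⋯ ≤ a_{r₁, r₂}. -/

import Mathlib

open Finset

/-- Matrices of the polytope model: entry `a p q` for row `p`, column `q`. -/
abbrev Mat := ℕ → ℕ → ℕ

/-- A monotone lattice path `β(1) = (1,i), …, β(n) = (i,n)`: each step increases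
the row or the column index by 1. -/
def IsPath (n i : ℕ) (β : ℕ → ℕ × ℕ) : Prop :=
  β 1 = (1, i) ∧ β n = (i, n) ∧
    ∀ s, 1 ≤ s → s < n →
      β (s + 1) = ((β s).1 + 1, (β s).2) ∨ β (s + 1) = ((β s).1, (β s).2 + 1)

/-- Membership in the Kirillov–Reshetikhin polytope `B^{i,m}` of type `A_n^{(1)}`:
non-negative integer matrices indexed by `1 ≤ p ≤ i`, `i ≤ q ≤ n` (zero outside),
all of whose monotone lattice-path sums are at most `m`. -/
def MemKR (n i m : ℕ) (a : Mat) : Prop :=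
  (∀ p q, ¬(1 ≤ p ∧ p ≤ i ∧ i ≤ q ∧ q ≤ n) → a p q = 0) ∧
  ∀ β : ℕ → ℕ × ℕ, IsPath n i β → ∑ s ∈ Icc 1 n, a (β s).1 (β s).2 ≤ m

/-- The set of maximizers of `F` on `S`. -/
def maximizers (S : Finset ℕ) (F : ℕ → ℕ) : Finset ℕ :=
  S.filter fun q => ∀ q' ∈ S, F q' ≤ F q

/-- Smallest maximizer. -/
def argmaxLow (S : Finset ℕ) (F : ℕ → ℕ) : ℕ := WithTop.untopD 0 (maximizers S F).min

/-- Largest maximizer. -/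
def argmaxHigh (S : Finset ℕ) (F : ℕ → ℕ) : ℕ := WithBot.unbotD 0 (maximizers S F).max

/-- For `l > i`: `G(q) = Σ_{j=1}^q a_{j,l-1} + Σ_{j=q}^i a_{j,l}`. -/
def Gplus (i : ℕ) (a : Mat) (l q : ℕ) : ℕ :=
  ∑ j ∈ Icc 1 q, a j (l - 1) + ∑ j ∈ Icc q i, a j l

/-- For `l < i`: `F(q) = Σ_{j=i}^q a_{l,j} + Σ_{j=q}^n a_{l+1,j}`. -/
def Fminus (n i : ℕ) (a : Mat) (l q : ℕ) : ℕ :=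
  ∑ j ∈ Icc i q, a l j + ∑ j ∈ Icc q n, a (l + 1) j

def pPlus (i : ℕ) (a : Mat) (l : ℕ) : ℕ := argmaxLow (Icc 1 i) (Gplus i a l)
def qPlus (i : ℕ) (a : Mat) (l : ℕ) : ℕ := argmaxHigh (Icc 1 i) (Gplus i a l)
def pMinus (n i : ℕ) (a : Mat) (l : ℕ) : ℕ := argmaxHigh (Icc i n) (Fminus n i a l)
def qMinus (n i : ℕ) (a : Mat) (l : ℕ) : ℕ := argmaxLow (Icc i n) (Fminus n i a l)

/-- The statistic `φ_l` of the polytope model (`l = 0` is the affine one). -/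
def phi (n i m : ℕ) (a : Mat) (l : ℕ) : ℤ :=
  if l = 0 then (a 1 n : ℤ)
  else if l = i then
    (m : ℤ) - ∑ j ∈ Icc 1 (i - 1), (a j i : ℤ) - ∑ j ∈ Icc i n, (a i j : ℤ)
  else if i < l then
    ∑ j ∈ Icc 1 (pPlus i a l), (a j (l - 1) : ℤ)
      - ∑ j ∈ Icc 1 (pPlus i a l - 1), (a j l : ℤ)
  else
    ∑ j ∈ Icc (pMinus n i a l) n, (a (l + 1) j : ℤ)
      - ∑ j ∈ Icc (pMinus n i a l + 1) n, (a l j : ℤ)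

/-- The statistic `ε_l` of the polytope model (`l = 0` is the affine one). -/
def eps (n i m : ℕ) (a : Mat) (l : ℕ) : ℤ :=
  if l = 0 then
    (m : ℤ) - ∑ j ∈ Icc i n, (a 1 j : ℤ) - ∑ j ∈ Icc 2 n, (a j n : ℤ)
  else if l = i then (a i i : ℤ)
  else if i < l then
    ∑ j ∈ Icc (qPlus i a l) i, (a j l : ℤ)
      - ∑ j ∈ Icc (qPlus i a l + 1) i, (a j (l - 1) : ℤ)
  else
    ∑ j ∈ Icc i (qMinus n i a l), (a l j : ℤ)
      - ∑ j ∈ Icc i (qMinus n i a l - 1), (a (l + 1) j : ℤ)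

/-- Update one entry of a matrix. -/
def upd (a : Mat) (p q v : ℕ) : Mat :=
  fun p' q' => if p' = p ∧ q' = q then v else a p' q'

/-- The Kashiwara raising operator `ẽ_l` on `B^{i,m}` (`l = 0` affine). -/
def eOp (n i m : ℕ) (a : Mat) (l : ℕ) : Option Mat :=
  if eps n i m a l ≤ 0 then none
  else some (
    if l = 0 then upd a 1 n (a 1 n + 1)
    else if l = i then upd a i i (a i i - 1)
    else if i < l then
      upd (upd a (qPlus i a l) (l - 1) (a (qPlus i a l) (l - 1) + 1))
        (qPlus i a l) l (a (qPlus i a l) l - 1)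
    else
      upd (upd a l (qMinus n i a l) (a l (qMinus n i a l) - 1))
        (l + 1) (qMinus n i a l) (a (l + 1) (qMinus n i a l) + 1))

/-- The Kashiwara lowering operator `f̃_l` on `B^{i,m}` (`l = 0` affine). -/
def fOp (n i m : ℕ) (a : Mat) (l : ℕ) : Option Mat :=
  if phi n i m a l ≤ 0 then none
  else some (
    if l = 0 then upd a 1 n (a 1 n - 1)
    else if l = i then upd a i i (a i i + 1)
    else if i < l then
      upd (upd a (pPlus i a l) (l - 1) (a (pPlus i a l) (l - 1) - 1))
        (pPlus i a l) l (a (pPlus i a l) l + 1)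
    else
      upd (upd a l (pMinus n i a l) (a l (pMinus n i a l) + 1))
        (l + 1) (pMinus n i a l) (a (l + 1) (pMinus n i a l) - 1))

/-- `ẽ_l` on the tensor product `B^{r₁,s₁} ⊗ B^{r₂,s₂}`. -/
def eTen (n r₁ s₁ r₂ s₂ l : ℕ) (x : Mat × Mat) : Option (Mat × Mat) :=
  if phi n r₂ s₂ x.2 l < eps n r₁ s₁ x.1 l then
    (eOp n r₁ s₁ x.1 l).map fun a' => (a', x.2)
  else (eOp n r₂ s₂ x.2 l).map fun b' => (x.1, b')

/-- `f̃_l` on the tensor product `B^{r₁,s₁} ⊗ B^{r₂,s₂}`. -/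
def fTen (n r₁ s₁ r₂ s₂ l : ℕ) (x : Mat × Mat) : Option (Mat × Mat) :=
  if phi n r₂ s₂ x.2 l ≤ eps n r₁ s₁ x.1 l then
    (fOp n r₁ s₁ x.1 l).map fun a' => (a', x.2)
  else (fOp n r₂ s₂ x.2 l).map fun b' => (x.1, b')

/-- Classical highest weight element of the tensor product. -/
def IsHW (n r₁ s₁ r₂ s₂ : ℕ) (x : Mat × Mat) : Prop :=
  ∀ l, 1 ≤ l → l ≤ n → eTen n r₁ s₁ r₂ s₂ l x = none

/-- Cartan matrix of type `A_n`: `⟨α_r, α_j^∨⟩`. -/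
def cartan (r j : ℕ) : ℤ :=
  if r = j then 2 else if r + 1 = j ∨ j + 1 = r then -1 else 0

/-- The pairing `⟨wt(A), α_j^∨⟩` where `wt(A) = m ω_i - Σ a_{p,q} α_{p,q}`,
and `α_{p,q} = α_p + ⋯ + α_q`. -/
def wtCoord (n i m : ℕ) (a : Mat) (j : ℕ) : ℤ :=
  (if j = i then (m : ℤ) else 0)
    - ∑ p ∈ Icc 1 i, ∑ q ∈ Icc i n, (a p q : ℤ) * ∑ r ∈ Icc p q, cartan r j

/-- The matrix `b^Λ` with `(p,q)`-entry `c ((p+q) mod (n+1))` on the index range. -/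
def bOf (n i : ℕ) (c : ℕ → ℕ) : Mat :=
  fun p q => if 1 ≤ p ∧ p ≤ i ∧ i ≤ q ∧ q ≤ n then c ((p + q) % (n + 1)) else 0

/-! ### Auxiliary lemmas for stmt10 -/

lemma sum_Icc_split (f : ℕ → ℕ) (a m b : ℕ) (h1 : a ≤ m + 1) (h2 : m ≤ b) :
    ∑ j ∈ Icc a b, f j = ∑ j ∈ Icc a m, f j + ∑ j ∈ Icc (m+1) b, f j := by
  rw [← Finset.sum_union]
  · apply Finset.sum_congr _ (fun x _ => rfl)
    ext x; simp only [Finset.mem_Icc, Finset.mem_union]; omega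
  · rw [Finset.disjoint_left]
    intro x hx hx'
    simp only [Finset.mem_Icc] at hx hx'
    omega

lemma arg_spec_high (S : Finset ℕ) (F : ℕ → ℕ) (hS : S.Nonempty) :
    argmaxHigh S F ∈ S ∧ ∀ q ∈ S, F q ≤ F (argmaxHigh S F) := by
  have hne : (maximizers S F).Nonempty := by
    obtain ⟨b, hb, hmax⟩ := S.exists_max_image F hS
    exact ⟨b, Finset.mem_filter.mpr ⟨hb, hmax⟩⟩
  obtain ⟨m, hm⟩ := Finset.max_of_nonempty hne
  have hmem := Finset.mem_of_max hm
  have harg : argmaxHigh S F = m := by unfold argmaxHigh; rw [hm]; rfl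
  rw [harg]
  rw [maximizers, Finset.mem_filter] at hmem
  exact hmem

lemma arg_spec_low (S : Finset ℕ) (F : ℕ → ℕ) (hS : S.Nonempty) :
    argmaxLow S F ∈ S ∧ ∀ q ∈ S, F q ≤ F (argmaxLow S F) := by
  have hne : (maximizers S F).Nonempty := by
    obtain ⟨b, hb, hmax⟩ := S.exists_max_image F hS
    exact ⟨b, Finset.mem_filter.mpr ⟨hb, hmax⟩⟩
  obtain ⟨m, hm⟩ := Finset.min_of_nonempty hne
  have hmem := Finset.mem_of_min hm
  have harg : argmaxLow S F = m := by unfold argmaxLow; rw [hm]; rfl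
  rw [harg]
  rw [maximizers, Finset.mem_filter] at hmem
  exact hmem

/-- If `ε_l(A) = 0` for `l > r₁`, then every suffix sum of column `l` is
dominated by the shifted suffix sum of column `l-1`. -/
lemma colStep (n r₁ s₁ : ℕ) (A : Mat) (l : ℕ) (h1 : 1 ≤ r₁) (hl : r₁ < l)
    (h0 : eps n r₁ s₁ A l = 0) :
    ∀ q, 1 ≤ q → q ≤ r₁ → ∑ j ∈ Icc q r₁, A j l ≤ ∑ j ∈ Icc (q+1) r₁, A j (l-1) := by
  intro q hq1 hq2
  have hS : (Icc 1 r₁).Nonempty := ⟨1, Finset.mem_Icc.mpr ⟨le_refl 1, h1⟩⟩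
  obtain ⟨hQmem, hQmax⟩ := arg_spec_high (Icc 1 r₁) (Gplus r₁ A l) hS
  have hQQ : qPlus r₁ A l = argmaxHigh (Icc 1 r₁) (Gplus r₁ A l) := rfl
  set Q := qPlus r₁ A l with hQdef
  rw [← hQQ] at hQmem hQmax
  rw [Finset.mem_Icc] at hQmem
  have h0' : (∑ j ∈ Icc Q r₁, (A j l : ℤ)) - ∑ j ∈ Icc (Q+1) r₁, (A j (l-1) : ℤ) = 0 := by
    have h := h0
    unfold eps at h
    rw [if_neg (by omega), if_neg (by omega), if_pos hl] at h
    exact h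
  have hE : ∑ j ∈ Icc Q r₁, A j l = ∑ j ∈ Icc (Q+1) r₁, A j (l-1) := by
    have := sub_eq_zero.mp h0'
    exact_mod_cast this
  have hG : Gplus r₁ A l q ≤ Gplus r₁ A l Q := hQmax q (Finset.mem_Icc.mpr ⟨hq1, hq2⟩)
  unfold Gplus at hG
  have hs1 : ∑ j ∈ Icc 1 r₁, A j (l-1)
      = ∑ j ∈ Icc 1 Q, A j (l-1) + ∑ j ∈ Icc (Q+1) r₁, A j (l-1) :=
    sum_Icc_split _ 1 Q r₁ (by omega) hQmem.2
  have hs2 : ∑ j ∈ Icc 1 r₁, A j (l-1)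
      = ∑ j ∈ Icc 1 q, A j (l-1) + ∑ j ∈ Icc (q+1) r₁, A j (l-1) :=
    sum_Icc_split _ 1 q r₁ (by omega) hq2
  omega

/-- If `ε_l(A) = 0` for `1 ≤ l < r₁`, then every prefix sum of row `l` is
dominated by the shifted prefix sum of row `l+1`. -/
lemma rowStep (n r₁ s₁ : ℕ) (A : Mat) (l : ℕ) (hl1 : 1 ≤ l) (hl : l < r₁) (hrn : r₁ ≤ n)
    (h0 : eps n r₁ s₁ A l = 0) :
    ∀ q, r₁ ≤ q → q ≤ n → ∑ j ∈ Icc r₁ q, A l j ≤ ∑ j ∈ Icc r₁ (q-1), A (l+1) j := by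
  intro q hq1 hq2
  have hS : (Icc r₁ n).Nonempty := ⟨r₁, Finset.mem_Icc.mpr ⟨le_refl r₁, hrn⟩⟩
  obtain ⟨hQmem, hQmax⟩ := arg_spec_low (Icc r₁ n) (Fminus n r₁ A l) hS
  have hQQ : qMinus n r₁ A l = argmaxLow (Icc r₁ n) (Fminus n r₁ A l) := rfl
  set Q := qMinus n r₁ A l with hQdef
  rw [← hQQ] at hQmem hQmax
  rw [Finset.mem_Icc] at hQmem
  have h0' : (∑ j ∈ Icc r₁ Q, (A l j : ℤ)) - ∑ j ∈ Icc r₁ (Q-1), (A (l+1) j : ℤ) = 0 := by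
    have h := h0
    unfold eps at h
    rw [if_neg (by omega), if_neg (by omega), if_neg (by omega)] at h
    exact h
  have hE : ∑ j ∈ Icc r₁ Q, A l j = ∑ j ∈ Icc r₁ (Q-1), A (l+1) j := by
    have := sub_eq_zero.mp h0'
    exact_mod_cast this
  have hG : Fminus n r₁ A l q ≤ Fminus n r₁ A l Q := hQmax q (Finset.mem_Icc.mpr ⟨hq1, hq2⟩)
  unfold Fminus at hG
  have hQ1 : Q - 1 + 1 = Q := by omega
  have hq1' : q - 1 + 1 = q := by omega
  have hs1 : ∑ j ∈ Icc r₁ n, A (l+1) j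
      = ∑ j ∈ Icc r₁ (Q-1), A (l+1) j + ∑ j ∈ Icc Q n, A (l+1) j := by
    have := sum_Icc_split (fun j => A (l+1) j) r₁ (Q-1) n (by omega) (by omega)
    rwa [hQ1] at this
  have hs2 : ∑ j ∈ Icc r₁ n, A (l+1) j
      = ∑ j ∈ Icc r₁ (q-1), A (l+1) j + ∑ j ∈ Icc q n, A (l+1) j := by
    have := sum_Icc_split (fun j => A (l+1) j) r₁ (q-1) n (by omega) (by omega)
    rwa [hq1'] at this
  omega

/-- if `ε_j(A) = 0` for all `j ≠ r₂` then `A` is supported on the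
antidiagonal `{(r₁-j, r₂+j) : 0 ≤ j ≤ k}` with weakly increasing entries
towards `(r₁, r₂)`. -/
theorem stmt10 (n r₁ s₁ r₂ : ℕ) (h1 : 1 ≤ r₁) (h12 : r₁ ≤ r₂) (h2n : r₂ ≤ n)
    (A : Mat) (hA : MemKR n r₁ s₁ A)
    (heps : ∀ j, 1 ≤ j → j ≤ n → j ≠ r₂ → eps n r₁ s₁ A j = 0) :
    (∀ p q, p + q ≠ r₁ + r₂ → A p q = 0) ∧
    (∀ j, j + 1 ≤ min (r₁ - 1) (n - r₂) →
      A (r₁ - (j + 1)) (r₂ + (j + 1)) ≤ A (r₁ - j) (r₂ + j)) := by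
  have hrn : r₁ ≤ n := le_trans h12 h2n
  -- column conditions
  have hcol : ∀ l, r₁ < l → l ≤ n → l ≠ r₂ → ∀ q, 1 ≤ q → q ≤ r₁ →
      ∑ j ∈ Icc q r₁, A j l ≤ ∑ j ∈ Icc (q+1) r₁, A j (l-1) := by
    intro l hl hln hne
    exact colStep n r₁ s₁ A l h1 hl (heps l (by omega) hln hne)
  -- row conditions
  have hrow : ∀ l, 1 ≤ l → l < r₁ → ∀ q, r₁ ≤ q → q ≤ n →
      ∑ j ∈ Icc r₁ q, A l j ≤ ∑ j ∈ Icc r₁ (q-1), A (l+1) j := by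
    intro l hl1 hl
    exact rowStep n r₁ s₁ A l hl1 hl hrn (heps l hl1 (by omega) (by omega))
  -- C1: columns strictly left of r₂ vanish
  have hC1 : ∀ l, r₁ ≤ l → l < r₂ → ∑ j ∈ Icc 1 r₁, A j l = 0 := by
    intro l hl
    induction l, hl using Nat.le_induction with
    | base =>
      intro hlt
      apply Finset.sum_eq_zero
      intro j hj
      rw [Finset.mem_Icc] at hj
      rcases eq_or_lt_of_le hj.2 with hj2 | hj2
      · subst hj2
        have h := heps j h1 hrn (by omega)
        unfold eps at h
        rw [if_neg (by omega), if_pos rfl] at h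
        exact_mod_cast h
      · have h := hrow j hj.1 hj2 r₁ (le_refl r₁) hrn
        have he : (Icc r₁ (r₁ - 1) : Finset ℕ) = ∅ := Finset.Icc_eq_empty (by omega)
        rw [he, Finset.sum_empty, Finset.Icc_self, Finset.sum_singleton] at h
        omega
    | succ l hl IH =>
      intro hlt
      have h0 : ∑ j ∈ Icc 1 r₁, A j l = 0 := IH (by omega)
      have h := hcol (l+1) (by omega) (by omega) (by omega) 1 le_rfl h1
      simp only [Nat.add_sub_cancel] at h
      have hsub : ∑ j ∈ Icc (1+1) r₁, A j l ≤ ∑ j ∈ Icc 1 r₁, A j l :=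
        Finset.sum_le_sum_of_subset (Finset.Icc_subset_Icc_left (by omega))
      omega
  -- C2: above the antidiagonal (columns ≥ r₂) everything vanishes
  have hC2 : ∀ l, r₂ ≤ l → l ≤ n → ∀ q, 1 ≤ q → r₁ + r₂ < q + l →
      ∑ j ∈ Icc q r₁, A j l = 0 := by
    intro l hl
    induction l, hl using Nat.le_induction with
    | base =>
      intro _ q _ hq
      rw [Finset.Icc_eq_empty (by omega), Finset.sum_empty]
    | succ l hl IH =>
      intro hln q hq1 hq
      by_cases hqr : r₁ < q
      · rw [Finset.Icc_eq_empty (by omega), Finset.sum_empty]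
      · push_neg at hqr
        have h := hcol (l+1) (by omega) hln (by omega) q hq1 hqr
        simp only [Nat.add_sub_cancel] at h
        have h0 : ∑ j ∈ Icc (q+1) r₁, A j l = 0 := IH (by omega) (q+1) (by omega) (by omega)
        omega
  -- C3: below the antidiagonal everything vanishes (by rows)
  have hC3 : ∀ t p q, p + t = r₁ → 1 ≤ p → q ≤ n → p + q < r₁ + r₂ →
      ∑ j ∈ Icc r₁ q, A p j = 0 := by
    intro t
    induction t with
    | zero =>
      intro p q hpt _ _ hpq
      have hp : p = r₁ := by omega
      rw [hp]
      apply Finset.sum_eq_zero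
      intro j hj
      rw [Finset.mem_Icc] at hj
      have := hC1 j hj.1 (by omega)
      rw [Finset.sum_eq_zero_iff] at this
      exact this r₁ (Finset.mem_Icc.mpr ⟨h1, le_refl r₁⟩)
    | succ t IH =>
      intro p q hpt hp1 hqn hpq
      by_cases hqr : q < r₁
      · rw [Finset.Icc_eq_empty (by omega), Finset.sum_empty]
      · push_neg at hqr
        have h := hrow p hp1 (by omega) q hqr hqn
        have h0 : ∑ j ∈ Icc r₁ (q-1), A (p+1) j = 0 :=
          IH (p+1) (q-1) (by omega) (by omega) (by omega) (by omega)
        omega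
  -- part 1
  have main1 : ∀ p q, p + q ≠ r₁ + r₂ → A p q = 0 := by
    intro p q hne
    by_cases hin : 1 ≤ p ∧ p ≤ r₁ ∧ r₁ ≤ q ∧ q ≤ n
    · obtain ⟨hp1, hpr, hrq, hqn⟩ := hin
      rcases lt_or_gt_of_ne hne with hlt | hgt
      · have h := hC3 (r₁ - p) p q (by omega) hp1 hqn hlt
        rw [Finset.sum_eq_zero_iff] at h
        exact h q (Finset.mem_Icc.mpr ⟨hrq, le_refl q⟩)
      · have h := hC2 q (by omega) hqn p hp1 (by omega)
        rw [Finset.sum_eq_zero_iff] at h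
        exact h p (Finset.mem_Icc.mpr ⟨le_refl p, hpr⟩)
    · exact hA.1 p q hin
  refine ⟨main1, ?_⟩
  -- part 2: monotonicity along the antidiagonal
  intro j hj
  rw [Nat.le_min] at hj
  set p := r₁ - (j + 1) with hpdef
  have hp1 : 1 ≤ p := by omega
  have hpr : p < r₁ := by omega
  set q := r₂ + (j + 1) with hqdef
  have hqn : q ≤ n := by omega
  have hrq : r₁ ≤ q := by omega
  have h := hrow p hp1 hpr q hrq hqn
  have hq1 : q - 1 = r₂ + j := by omega
  rw [hq1] at h
  have hL : A p q ≤ ∑ j' ∈ Icc r₁ q, A p j' :=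
    Finset.single_le_sum (fun i _ => Nat.zero_le _) (Finset.mem_Icc.mpr ⟨hrq, le_refl q⟩)
  have hR : ∑ j' ∈ Icc r₁ (r₂ + j), A (p+1) j' = A (p+1) (r₂ + j) := by
    apply Finset.sum_eq_single_of_mem
    · exact Finset.mem_Icc.mpr ⟨by omega, le_refl _⟩
    · intro b hb hbne
      rw [Finset.mem_Icc] at hb
      exact main1 (p+1) b (by omega)
  have hfin : A p q ≤ A (p+1) (r₂ + j) := by omega
  have e1 : r₁ - j = p + 1 := by omega
  rw [e1]
  exact hfin
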